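/- The Mallows-RMJ top-k probabilities sum to 1: for an injective ranking on a finite set S with |S| = n, φ > 0, and 1 ≤ k ≤ n, the sum over all ordered k-tuples (y_1,…,y_k) of distinct elements of S of (ψ(n−k,φ)/ψ(n,φ)) · φ^{d(μ^k,S)} equals 1, where d(μ^k,S) = Σ_{i=1}^{k−1} 𝟙{y_i ranked worse than y_{i+1}}·(n−i) + Σ_{y_j ∈ S\{y_1,…,y_k}} 𝟙{y_k ranked worse than y_j}. -/

import Mathlib

/-- `ψ m φ = ∏_{i=1}^{m} (1 + φ + ⋯ + φ^{i-1})`, with `ψ 0 φ = 1`. -/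
noncomputable def psiRMJ (m : ℕ) (φ : ℝ) : ℝ :=
  ∏ i ∈ Finset.range m, ∑ j ∈ Finset.range (i + 1), φ ^ j

/-- Mallows-RMJ distance of the ordered tuple `μ^k = (y 0, …, y k)` from the
assortment `S`:
`d(μ^k,S) = ∑_{i=1}^{k−1} 𝟙{y_i ranked worse than y_{i+1}}·(n−i)
  + ∑_{y_j ∈ S∖{y_1,…,y_k}} 𝟙{y_k ranked worse than y_j}`,
where "ranked worse" means a strictly larger value of `ρ`. -/
noncomputable def dRMJ {α : Type*} [DecidableEq α] (S : Finset α) (ρ : α → ℝ)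
    {k : ℕ} (y : Fin (k + 1) → α) : ℕ :=
  (∑ i : Fin k,
      if ρ (y i.succ) < ρ (y i.castSucc) then S.card - (↑i + 1) else 0) +
    ∑ z ∈ S \ Finset.univ.image y,
      if ρ z < ρ (y (Fin.last k)) then 1 else 0


open Classical in
lemma rank_sum {α : Type*} (φ : ℝ) (T : Finset α) (ρ : α → ℝ)
    (hinj : Set.InjOn ρ ↑T) :
    ∑ w ∈ T, φ ^ (T.filter (fun z => ρ z < ρ w)).card
      = ∑ j ∈ Finset.range T.card, φ ^ j := by
  obtain ⟨c, hn⟩ : ∃ c, T.card = c := ⟨_, rfl⟩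
  induction c generalizing T with
  | zero => simp [Finset.card_eq_zero.mp hn]
  | succ m ih =>
    have hne : T.Nonempty := by rw [← Finset.card_pos, hn]; omega
    obtain ⟨w0, hw0T, hw0⟩ := T.exists_max_image ρ hne
    have hlt : ∀ z ∈ T, z ≠ w0 → ρ z < ρ w0 := fun z hz hzw =>
      lt_of_le_of_ne (hw0 z hz) (fun h => hzw (hinj hz hw0T h))
    have hfil0 : T.filter (fun z => ρ z < ρ w0) = T.erase w0 := by
      ext z
      simp only [Finset.mem_filter, Finset.mem_erase]
      constructor
      · rintro ⟨hz, hlt'⟩; exact ⟨fun h => absurd hlt' (by simp [h]), hz⟩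
      · rintro ⟨hzw, hz⟩; exact ⟨hz, hlt z hz hzw⟩
    have hcard' : (T.erase w0).card = m := by simp [Finset.card_erase_of_mem hw0T, hn]
    rw [← Finset.add_sum_erase _ _ hw0T]
    have hstep : ∀ w ∈ T.erase w0, (T.filter (fun z => ρ z < ρ w)).card
        = ((T.erase w0).filter (fun z => ρ z < ρ w)).card := by
      intro w hw
      rw [Finset.filter_erase, Finset.erase_eq_of_notMem]
      simp only [Finset.mem_filter, not_and]
      intro _
      exact not_lt.2 (hw0 w (Finset.mem_of_mem_erase hw))
    rw [hfil0, hcard',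
        Finset.sum_congr rfl (fun w hw => by rw [hstep w hw]),
        ih (T.erase w0) (hinj.mono (by simp [Finset.erase_subset])) hcard',
        hcard', hn, Finset.sum_range_succ, add_comm]

open Classical in
lemma pivot_sum {α : Type*} (φ : ℝ) (T : Finset α) (ρ : α → ℝ)
    (hinj : Set.InjOn ρ ↑T) (b : ℝ) (hb : ∀ z ∈ T, ρ z ≠ b) :
    ∑ w ∈ T, φ ^ ((if ρ w < b then T.card else 0)
        + (T.filter (fun z => ρ z < ρ w)).card)
      = φ ^ (T.filter (fun z => ρ z < b)).card
          * ∑ j ∈ Finset.range T.card, φ ^ j := by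
  set M : ℝ := 1 + 2 * ∑ z ∈ T, |ρ z| with hM
  have hMbig : ∀ z ∈ T, ∀ w ∈ T, ρ z < ρ w + M := by
    intro z hz w hw
    have h1 : |ρ z| ≤ ∑ z ∈ T, |ρ z| :=
      Finset.single_le_sum (fun i _ => abs_nonneg (ρ i)) hz
    have h2 : |ρ w| ≤ ∑ z ∈ T, |ρ z| :=
      Finset.single_le_sum (fun i _ => abs_nonneg (ρ i)) hw
    have := abs_le.mp (le_refl |ρ z|)
    have hz' := neg_abs_le (ρ z); have hz'' := le_abs_self (ρ z)
    have hw' := neg_abs_le (ρ w); have hw'' := le_abs_self (ρ w)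
    nlinarith
  set ρ' : α → ℝ := fun z => if ρ z < b then ρ z + M else ρ z with hρ'
  have hinj' : Set.InjOn ρ' ↑T := by
    intro z hz w hw h
    simp only [hρ'] at h
    by_cases h1 : ρ z < b <;> by_cases h2 : ρ w < b <;> simp [h1, h2] at h
    · exact hinj hz hw (by linarith)
    · exact absurd (hMbig w hw z hz) (by push_neg; linarith)
    · exact absurd (hMbig z hz w hw) (by push_neg; linarith)
    · exact hinj hz hw h
  set r : ℕ := (T.filter (fun z => ρ z < b)).card with hr
  have hrle : r ≤ T.card := Finset.card_filter_le _ _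
  have key : ∀ w ∈ T,
      r + (T.filter (fun z => ρ' z < ρ' w)).card
        = (if ρ w < b then T.card else 0)
            + (T.filter (fun z => ρ z < ρ w)).card := by
    intro w hw
    by_cases hwb : ρ w < b
    · have hfe : T.filter (fun z => ρ' z < ρ' w)
          = T.filter (fun z => ¬ ρ z < b) ∪ T.filter (fun z => ρ z < ρ w) := by
        rw [← Finset.filter_or]
        apply Finset.filter_congr
        intro z hz
        simp only [hρ', hwb, if_pos hwb, eq_iff_iff]
        by_cases hzb : ρ z < b
        · simp only [if_pos hzb]
          constructor
          · intro h
            right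
            linarith
          · rintro (h | h)
            · exact absurd hzb h
            · linarith
        · simp only [if_neg hzb]
          constructor
          · intro _
            left
            exact hzb
          · intro _
            exact hMbig z hz w hw
      have hdisj : Disjoint (T.filter (fun z => ¬ ρ z < b))
          (T.filter (fun z => ρ z < ρ w)) := by
        rw [Finset.disjoint_filter]
        exact fun z hz hz1 hz2 => hz1 (lt_trans hz2 hwb)
      rw [hfe, Finset.card_union_of_disjoint hdisj, if_pos hwb]
      have : (T.filter (fun z => ¬ ρ z < b)).card = T.card - r := by
        have := Finset.card_filter_add_card_filter_not
          (s := T) (p := fun z => ρ z < b)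
        omega
      omega
    · have hfe : T.filter (fun z => ρ z < ρ w)
          = T.filter (fun z => ρ z < b) ∪ T.filter (fun z => ρ' z < ρ' w) := by
        rw [← Finset.filter_or]
        apply Finset.filter_congr
        intro z hz
        have hwb' : b < ρ w := lt_of_le_of_ne (not_lt.mp hwb) (Ne.symm (hb w hw))
        simp only [hρ', if_neg hwb, eq_iff_iff]
        by_cases hzb : ρ z < b
        · simp only [if_pos hzb]
          constructor
          · intro _
            left
            exact hzb
          · intro _
            linarith
        · simp only [if_neg hzb]
          constructor
          · intro h
            right
            exact h
          · rintro (h | h)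
            · exact absurd h hzb
            · exact h
      have hdisj : Disjoint (T.filter (fun z => ρ z < b))
          (T.filter (fun z => ρ' z < ρ' w)) := by
        rw [Finset.disjoint_filter]
        intro z hz hz1 hz2
        simp only [hρ', if_pos hz1, if_neg hwb] at hz2
        exact absurd (hMbig w hw z hz) (by push_neg; linarith)
      rw [if_neg hwb]
      rw [hfe, Finset.card_union_of_disjoint hdisj]
      omega
  calc ∑ w ∈ T, φ ^ ((if ρ w < b then T.card else 0)
          + (T.filter (fun z => ρ z < ρ w)).card)
      = ∑ w ∈ T, φ ^ r * φ ^ (T.filter (fun z => ρ' z < ρ' w)).card := by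
        apply Finset.sum_congr rfl
        intro w hw
        rw [← pow_add, key w hw]
    _ = φ ^ r * ∑ w ∈ T, φ ^ (T.filter (fun z => ρ' z < ρ' w)).card := by
        rw [Finset.mul_sum]
    _ = φ ^ r * ∑ j ∈ Finset.range T.card, φ ^ j := by
        rw [rank_sum φ T ρ' hinj']

open Classical in
lemma image_snoc {α : Type*} [DecidableEq α] {k : ℕ} (y : Fin (k + 1) → α) (w : α) :
    (Finset.univ.image (Fin.snoc y w : Fin (k + 2) → α))
      = insert w (Finset.univ.image y) := by
  ext a
  simp only [Finset.mem_image, Finset.mem_insert, Finset.mem_univ, true_and]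
  constructor
  · rintro ⟨i, hi⟩
    induction i using Fin.lastCases with
    | last => left; rw [← hi, Fin.snoc_last]
    | cast j => right; exact ⟨j, by rw [← hi, Fin.snoc_castSucc]⟩
  · rintro (rfl | ⟨j, rfl⟩)
    · exact ⟨Fin.last _, Fin.snoc_last _ _⟩
    · exact ⟨j.castSucc, Fin.snoc_castSucc _ _ _⟩

lemma snoc_injective {α : Type*} {k : ℕ} {y : Fin (k + 1) → α} {w : α}
    (hy : Function.Injective y) (hw : ∀ i, y i ≠ w) :
    Function.Injective (Fin.snoc y w : Fin (k + 2) → α) := by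
  intro i j h
  induction i using Fin.lastCases with
  | last =>
    induction j using Fin.lastCases with
    | last => rfl
    | cast j' =>
      rw [Fin.snoc_last, Fin.snoc_castSucc] at h
      exact absurd h.symm (hw j')
  | cast i' =>
    induction j using Fin.lastCases with
    | last =>
      rw [Fin.snoc_last, Fin.snoc_castSucc] at h
      exact absurd h (hw i')
    | cast j' =>
      rw [Fin.snoc_castSucc, Fin.snoc_castSucc] at h
      rw [hy h]

open Classical in
lemma coreRMJ {α : Type*} [Fintype α] [DecidableEq α]
    (S : Finset α) (ρ : α → ℝ) (hinj : Set.InjOn ρ ↑S) (φ : ℝ) :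
    ∀ k : ℕ, k + 1 ≤ S.card →
    ∑ y ∈ (Finset.univ : Finset (Fin (k + 1) → α)).filter
        (fun y => Function.Injective y ∧ ∀ i, y i ∈ S),
      φ ^ dRMJ S ρ y
      = ∏ i ∈ Finset.range (k + 1), ∑ j ∈ Finset.range (S.card - i), φ ^ j := by
  intro k
  induction k with
  | zero =>
    intro _
    rw [Finset.prod_range_one, Nat.sub_zero, ← rank_sum φ S ρ hinj]
    refine Finset.sum_nbij' (fun y => y 0) (fun a => fun _ => a) ?_ ?_ ?_ ?_ ?_
    · intro y hy
      exact ((Finset.mem_filter.mp hy).2.2) 0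
    · intro a ha
      simp only [Finset.mem_filter, Finset.mem_univ, true_and]
      exact ⟨fun i j _ => by rw [Fin.fin_one_eq_zero i, Fin.fin_one_eq_zero j], fun _ => ha⟩
    · intro y _
      funext i
      rw [Fin.fin_one_eq_zero i]
    · intro a _
      rfl
    · intro y _
      congr 1
      have himg : (Finset.univ.image y : Finset α) = {y 0} := by
        ext a
        simp only [Finset.mem_image, Finset.mem_singleton, Finset.mem_univ, true_and]
        constructor
        · rintro ⟨i, rfl⟩
          rw [Fin.fin_one_eq_zero i]
        · rintro rfl
          exact ⟨0, rfl⟩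
      have hlast : Fin.last 0 = (0 : Fin 1) := rfl
      simp only [dRMJ, Finset.univ_eq_empty, Finset.sum_empty, zero_add, himg, hlast,
        Finset.sdiff_singleton_eq_erase, ← Finset.card_filter, Finset.filter_erase]
      rw [Finset.erase_eq_of_notMem]
      simp only [Finset.mem_filter, not_and]
      exact fun _ => lt_irrefl _
  | succ k ih =>
    intro hk2
    have hk1 : k + 1 ≤ S.card := by omega
    -- Step 1: reindex the sum over (k+2)-tuples as a double sum
    have hstep : ∑ y ∈ (Finset.univ : Finset (Fin (k + 2) → α)).filter
          (fun y => Function.Injective y ∧ ∀ i, y i ∈ S),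
        φ ^ dRMJ S ρ y
        = ∑ y ∈ (Finset.univ : Finset (Fin (k + 1) → α)).filter
            (fun y => Function.Injective y ∧ ∀ i, y i ∈ S),
          ∑ w ∈ S \ Finset.univ.image y, φ ^ dRMJ S ρ (Fin.snoc y w) := by
      rw [← Finset.sum_sigma ((Finset.univ : Finset (Fin (k + 1) → α)).filter
            (fun y => Function.Injective y ∧ ∀ i, y i ∈ S))
          (fun y => S \ Finset.univ.image y)
          (fun p => φ ^ dRMJ S ρ (Fin.snoc p.1 p.2 : Fin (k + 2) → α))]
      refine Finset.sum_nbij' (fun y' => ⟨Fin.init y', y' (Fin.last (k + 1))⟩)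
        (fun p => Fin.snoc p.1 p.2) ?_ ?_ ?_ ?_ ?_
      · intro y' hy'
        obtain ⟨-, hi, hS⟩ := Finset.mem_filter.mp hy'
        refine Finset.mem_sigma.mpr ⟨Finset.mem_filter.mpr ⟨Finset.mem_univ _, ?_, ?_⟩, ?_⟩
        · exact fun i j h => Fin.castSucc_injective _ (hi h)
        · exact fun i => hS _
        · refine Finset.mem_sdiff.mpr ⟨hS _, ?_⟩
          simp only [Finset.mem_image, Finset.mem_univ, true_and, not_exists]
          intro i h
          exact absurd (hi h) (ne_of_lt (Fin.castSucc_lt_last i))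
      · rintro ⟨y, w⟩ hp
        dsimp only
        obtain ⟨hy, hw⟩ := Finset.mem_sigma.mp hp
        obtain ⟨-, hyi, hyS⟩ := Finset.mem_filter.mp hy
        obtain ⟨hwS, hwim⟩ := Finset.mem_sdiff.mp hw
        refine Finset.mem_filter.mpr ⟨Finset.mem_univ _, ?_, ?_⟩
        · refine snoc_injective hyi (fun i h => ?_)
          exact hwim (Finset.mem_image.mpr ⟨i, Finset.mem_univ _, h⟩)
        · intro i
          induction i using Fin.lastCases with
          | last => rwa [Fin.snoc_last]
          | cast j => rw [Fin.snoc_castSucc]; exact hyS j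
      · intro y' _
        exact Fin.snoc_init_self y'
      · rintro ⟨y, w⟩ _
        simp [Fin.init_snoc, Fin.snoc_last]
      · intro y' _
        rw [Fin.snoc_init_self]
    rw [hstep]
    -- Step 2: evaluate the inner sum
    have hinner : ∀ y ∈ (Finset.univ : Finset (Fin (k + 1) → α)).filter
          (fun y => Function.Injective y ∧ ∀ i, y i ∈ S),
        ∑ w ∈ S \ Finset.univ.image y, φ ^ dRMJ S ρ (Fin.snoc y w)
          = φ ^ dRMJ S ρ y * ∑ j ∈ Finset.range (S.card - (k + 1)), φ ^ j := by
      intro y hy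
      obtain ⟨-, hyi, hyS⟩ := Finset.mem_filter.mp hy
      set T : Finset α := S \ Finset.univ.image y with hT
      have hTsub : T ⊆ S := Finset.sdiff_subset
      have hTcard : T.card = S.card - (k + 1) := by
        rw [hT, Finset.card_sdiff_of_subset (Finset.image_subset_iff.mpr (fun i _ => hyS i)),
          Finset.card_image_of_injective _ hyi, Finset.card_univ, Fintype.card_fin]
      set b : ℝ := ρ (y (Fin.last k)) with hb
      have hbT : ∀ z ∈ T, ρ z ≠ b := by
        intro z hz hzb
        have hzS : z ∈ S := hTsub hz
        have : z = y (Fin.last k) := hinj hzS (hyS _) hzb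
        subst this
        exact (Finset.mem_sdiff.mp hz).2
          (Finset.mem_image.mpr ⟨Fin.last k, Finset.mem_univ _, rfl⟩)
      set dA : ℕ := ∑ i : Fin k,
        if ρ (y i.succ) < ρ (y i.castSucc) then S.card - (↑i + 1) else 0 with hdA
      have hdecomp : ∀ w ∈ T, dRMJ S ρ (Fin.snoc y w : Fin (k + 2) → α)
          = dA + ((if ρ w < b then T.card else 0)
              + (T.filter (fun z => ρ z < ρ w)).card) := by
        intro w hw
        have hfirst : ∑ i : Fin (k + 1),
            (if ρ ((Fin.snoc y w : Fin (k + 2) → α) i.succ)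
                < ρ ((Fin.snoc y w : Fin (k + 2) → α) i.castSucc)
              then S.card - (↑i + 1) else 0)
            = dA + (if ρ w < b then T.card else 0) := by
          rw [Fin.sum_univ_castSucc]
          congr 1
          · rw [hdA]
            apply Finset.sum_congr rfl
            intro j _
            rw [Fin.succ_castSucc, Fin.snoc_castSucc, Fin.snoc_castSucc]
            rfl
          · rw [Fin.succ_last, Fin.snoc_last, Fin.snoc_castSucc]
            simp only [Fin.val_last, ← hb, hTcard]
        have hsecond : ∑ z ∈ S \ Finset.univ.image (Fin.snoc y w : Fin (k + 2) → α),
            (if ρ z < ρ ((Fin.snoc y w : Fin (k + 2) → α) (Fin.last (k + 1))) then 1 else 0)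
            = (T.filter (fun z => ρ z < ρ w)).card := by
          rw [Fin.snoc_last, image_snoc, Finset.sdiff_insert, ← hT,
            ← Finset.card_filter, Finset.filter_erase, Finset.erase_eq_of_notMem]
          simp only [Finset.mem_filter, not_and]
          exact fun _ => lt_irrefl _
        rw [dRMJ, hfirst, hsecond, add_assoc]
      have hdy : dRMJ S ρ y = dA + (T.filter (fun z => ρ z < b)).card := by
        rw [dRMJ, ← hdA, ← hT, ← hb, ← Finset.card_filter]
      calc ∑ w ∈ T, φ ^ dRMJ S ρ (Fin.snoc y w : Fin (k + 2) → α)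
          = ∑ w ∈ T, φ ^ dA * φ ^ ((if ρ w < b then T.card else 0)
              + (T.filter (fun z => ρ z < ρ w)).card) := by
            apply Finset.sum_congr rfl
            intro w hw
            rw [← pow_add, hdecomp w hw]
        _ = φ ^ dA * (φ ^ (T.filter (fun z => ρ z < b)).card
              * ∑ j ∈ Finset.range T.card, φ ^ j) := by
            rw [← Finset.mul_sum, pivot_sum φ T ρ (hinj.mono (by exact_mod_cast hTsub)) b hbT]
        _ = φ ^ dRMJ S ρ y * ∑ j ∈ Finset.range (S.card - (k + 1)), φ ^ j := by
            rw [hdy, pow_add, hTcard, mul_assoc]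
    rw [Finset.sum_congr rfl hinner, ← Finset.sum_mul, ih hk1]
    exact (Finset.prod_range_succ _ (k + 1)).symm

lemma psiRMJ_pos (m : ℕ) {φ : ℝ} (hφ : 0 < φ) : 0 < psiRMJ m φ :=
  Finset.prod_pos fun i _ => Finset.sum_pos (fun j _ => pow_pos hφ j)
    ⟨0, Finset.mem_range.mpr (Nat.succ_pos i)⟩

lemma psiRMJ_split {φ : ℝ} {n k : ℕ} (hk : k + 1 ≤ n) :
    psiRMJ n φ = psiRMJ (n - (k + 1)) φ
      * ∏ i ∈ Finset.range (k + 1), ∑ j ∈ Finset.range (n - i), φ ^ j := by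
  have hn : n = (n - (k + 1)) + (k + 1) := by omega
  calc psiRMJ n φ
      = ∏ i ∈ Finset.range ((n - (k + 1)) + (k + 1)),
          ∑ j ∈ Finset.range (i + 1), φ ^ j := by rw [psiRMJ, ← hn]
    _ = psiRMJ (n - (k + 1)) φ * ∏ i ∈ Finset.range (k + 1),
          ∑ j ∈ Finset.range ((n - (k + 1)) + i + 1), φ ^ j := by
        rw [Finset.prod_range_add, psiRMJ]
    _ = psiRMJ (n - (k + 1)) φ
          * ∏ i ∈ Finset.range (k + 1), ∑ j ∈ Finset.range (n - i), φ ^ j := by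
        congr 1
        rw [← Finset.prod_range_reflect
          (fun i => ∑ j ∈ Finset.range (n - i), φ ^ j) (k + 1)]
        apply Finset.prod_congr rfl
        intro i hi
        have hi' : i < k + 1 := Finset.mem_range.mp hi
        have h : n - (k + 1) + i + 1 = n - (k + 1 - 1 - i) := by omega
        rw [h]

open Classical in
theorem mallowsRMJ_topk_sum_to_one {α : Type*} [Fintype α] [DecidableEq α]
    (S : Finset α) (ρ : α → ℝ) (hinj : Set.InjOn ρ ↑S)
    (φ : ℝ) (hφ : 0 < φ) (k : ℕ) (hk : k + 1 ≤ S.card) :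
    ∑ y ∈ (Finset.univ : Finset (Fin (k + 1) → α)).filter
        (fun y => Function.Injective y ∧ ∀ i, y i ∈ S),
      psiRMJ (S.card - (k + 1)) φ / psiRMJ S.card φ * φ ^ dRMJ S ρ y = 1 := by
  rw [← Finset.mul_sum, coreRMJ S ρ hinj φ k hk, div_mul_eq_mul_div,
    div_eq_one_iff_eq (ne_of_gt (psiRMJ_pos S.card hφ))]
  exact (psiRMJ_split hk).symm
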